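/- arXiv:1608.03505 — 15 statements merged into one kernel-verified Lean document; each statement's English description precedes it below -/
import Mathlib

section
/- If (L, [-,-], ε) is a Leibniz color algebra, then the trilinear bracket [x,y,z] := [x,[y,z]] makes L into a ternary Leibniz color algebra, i.e. it satisfies the ternary ε-Nambu identity [[x,y,z],t,u] = [x,y,[z,t,u]] + ε(z,t+u)[x,[y,t,u],z] + ε(y+z,t+u)[[x,t,u],y,z] for all homogeneous x,y,z,t,u. -/
/-- A Leibniz color algebra gives a ternary Leibniz color algebra via
`[x,y,z] := [x,[y,z]]`. -/
theorem stmt0 {K G A : Type*} [Field K] [AddCommGroup G] [AddCommGroup A] [Module K A]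
    (𝒜 : G → Submodule K A) (ε : G → G → K)
    (hε1 : ∀ a b, ε a b * ε b a = 1)
    (hε2 : ∀ a b c, ε a (b + c) = ε a b * ε a c)
    (hε3 : ∀ a b c, ε (a + b) c = ε a c * ε b c)
    (br : A →ₗ[K] A →ₗ[K] A)
    (hgr : ∀ a b : G, ∀ x ∈ 𝒜 a, ∀ y ∈ 𝒜 b, br x y ∈ 𝒜 (a + b))
    (hLeib : ∀ a b c : G, ∀ x ∈ 𝒜 a, ∀ y ∈ 𝒜 b, ∀ z ∈ 𝒜 c,
      br (br x y) z = br x (br y z) + ε b c • br (br x z) y) :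
    ∀ a b c d e : G, ∀ x ∈ 𝒜 a, ∀ y ∈ 𝒜 b, ∀ z ∈ 𝒜 c, ∀ t ∈ 𝒜 d, ∀ u ∈ 𝒜 e,
      br (br x (br y z)) (br t u)
        = br x (br y (br z (br t u)))
          + ε c (d + e) • br x (br (br y (br t u)) z)
          + ε (b + c) (d + e) • br (br x (br t u)) (br y z) := by
  intro a b c d e x hx y hy z hz t ht u hu
  have h1 := hLeib a (b+c) (d+e) x hx (br y z) (hgr b c y hy z hz) (br t u) (hgr d e t ht u hu)
  have h2 := hLeib b c (d+e) y hy z hz (br t u) (hgr d e t ht u hu)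
  rw [h1, h2, map_add, map_smul, add_assoc]
end

section
/- If (L, [-,-], ε, R) is a Rota-Baxter Leibniz color algebra of weight λ, then L equipped with the new bracket [x,y]_λ := [R(x),y] + [x,R(y)] + λ[x,y] is again a Rota-Baxter Leibniz color algebra of weight λ with the same operator R. -/
/-- The deformed bracket `[x,y]_λ := [R(x),y] + [x,R(y)] + λ[x,y]`. -/
def brLam {K A : Type*} [Field K] [AddCommGroup A] [Module K A]
    (br : A → A → A) (R : A → A) (lam : K) (x y : A) : A :=
  br (R x) y + br x (R y) + lam • br x y

/-- A Rota-Baxter Leibniz color algebra of weight λ gives, via the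
bracket `[x,y]_λ`, another Rota-Baxter Leibniz color algebra of weight λ with the
same operator R. -/
theorem stmt3 {K G A : Type*} [Field K] [AddCommGroup G] [AddCommGroup A] [Module K A]
    (𝒜 : G → Submodule K A) (ε : G → G → K)
    (hε1 : ∀ a b, ε a b * ε b a = 1)
    (hε2 : ∀ a b c, ε a (b + c) = ε a b * ε a c)
    (hε3 : ∀ a b c, ε (a + b) c = ε a c * ε b c)
    (br : A →ₗ[K] A →ₗ[K] A)
    (hgr : ∀ a b : G, ∀ x ∈ 𝒜 a, ∀ y ∈ 𝒜 b, br x y ∈ 𝒜 (a + b))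
    (hLeib : ∀ a b c : G, ∀ x ∈ 𝒜 a, ∀ y ∈ 𝒜 b, ∀ z ∈ 𝒜 c,
      br (br x y) z = br x (br y z) + ε b c • br (br x z) y)
    (R : A →ₗ[K] A) (lam : K)
    (hReven : ∀ a : G, ∀ x ∈ 𝒜 a, R x ∈ 𝒜 a)
    (hRB : ∀ a b : G, ∀ x ∈ 𝒜 a, ∀ y ∈ 𝒜 b,
      br (R x) (R y) = R (br (R x) y + br x (R y) + lam • br x y)) :
    (∀ a b c : G, ∀ x ∈ 𝒜 a, ∀ y ∈ 𝒜 b, ∀ z ∈ 𝒜 c,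
      brLam (fun u v => br u v) (fun u => R u) lam
          (brLam (fun u v => br u v) (fun u => R u) lam x y) z
        = brLam (fun u v => br u v) (fun u => R u) lam x
            (brLam (fun u v => br u v) (fun u => R u) lam y z)
          + ε b c • brLam (fun u v => br u v) (fun u => R u) lam
              (brLam (fun u v => br u v) (fun u => R u) lam x z) y) ∧
    (∀ a b : G, ∀ x ∈ 𝒜 a, ∀ y ∈ 𝒜 b,
      brLam (fun u v => br u v) (fun u => R u) lam (R x) (R y)
        = R (brLam (fun u v => br u v) (fun u => R u) lam (R x) y
            + brLam (fun u v => br u v) (fun u => R u) lam x (R y)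
            + lam • brLam (fun u v => br u v) (fun u => R u) lam x y)) := by
  constructor
  · intro a b c x hx y hy z hz
    have hRx := hReven a x hx
    have hRy := hReven b y hy
    have hRz := hReven c z hz
    have e1 := hLeib a b c (R x) hRx (R y) hRy z hz
    have e2 := hLeib a b c (R x) hRx y hy (R z) hRz
    have e3 := hLeib a b c x hx (R y) hRy (R z) hRz
    have e4 := hLeib a b c x hx y hy (R z) hRz
    have e5 := hLeib a b c (R x) hRx y hy z hz
    have e6 := hLeib a b c x hx (R y) hRy z hz
    have e7 := hLeib a b c x hx y hy z hz
    have rxy := hRB a b x hx y hy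
    have ryz := hRB b c y hy z hz
    have rxz := hRB a c x hx z hz
    simp only [brLam]
    rw [← rxy, ← ryz, ← rxz]
    simp only [map_add, map_smul, LinearMap.add_apply, LinearMap.smul_apply]
    rw [e1, e2, e3, e4, e5, e6, e7]
    module
  · intro a b x hx y hy
    have hRx := hReven a x hx
    have hRy := hReven b y hy
    have h1 := hRB a b (R x) hRx y hy
    have h2 := hRB a b x hx (R y) hRy
    have h3 := hRB a b x hx y hy
    simp only [brLam]
    rw [h1, h2, h3]
    simp only [map_add, map_smul]
end

section
/- If (L, [-,-], ε, R) is a Rota-Baxter Lie color algebra of weight 0, then the product x·y := [R(x), y] makes L into a left-symmetric color algebra. -/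
/-- A Rota-Baxter Lie color algebra of weight 0 gives a left-symmetric
color algebra via `x·y := [R(x), y]`. -/
theorem stmt5 {K G A : Type*} [Field K] [AddCommGroup G] [AddCommGroup A] [Module K A]
    (𝒜 : G → Submodule K A) (ε : G → G → K)
    (hε1 : ∀ a b, ε a b * ε b a = 1)
    (hε2 : ∀ a b c, ε a (b + c) = ε a b * ε a c)
    (hε3 : ∀ a b c, ε (a + b) c = ε a c * ε b c)
    (br : A →ₗ[K] A →ₗ[K] A)
    (hgr : ∀ a b : G, ∀ x ∈ 𝒜 a, ∀ y ∈ 𝒜 b, br x y ∈ 𝒜 (a + b))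
    (hskew : ∀ a b : G, ∀ x ∈ 𝒜 a, ∀ y ∈ 𝒜 b, br x y = -(ε a b • br y x))
    (hjac : ∀ a b c : G, ∀ x ∈ 𝒜 a, ∀ y ∈ 𝒜 b, ∀ z ∈ 𝒜 c,
      ε c a • br x (br y z) + ε a b • br y (br z x) + ε b c • br z (br x y) = 0)
    (R : A →ₗ[K] A)
    (hReven : ∀ a : G, ∀ x ∈ 𝒜 a, R x ∈ 𝒜 a)
    (hRB : ∀ a b : G, ∀ x ∈ 𝒜 a, ∀ y ∈ 𝒜 b,
      br (R x) (R y) = R (br (R x) y + br x (R y))) :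
    ∀ a b c : G, ∀ x ∈ 𝒜 a, ∀ y ∈ 𝒜 b, ∀ z ∈ 𝒜 c,
      br (R (br (R x) y)) z - br (R x) (br (R y) z)
        = ε a b • (br (R (br (R y) x)) z - br (R y) (br (R x) z)) := by
  intro a b c x hx y hy z hz
  set X := R x with hXdef
  set Y := R y with hYdef
  have hX : X ∈ 𝒜 a := hReven a x hx
  have hY : Y ∈ 𝒜 b := hReven b y hy
  have hXY : br X Y ∈ 𝒜 (a + b) := hgr a b X hX Y hY
  have hac : ε c a * ε a c = 1 := hε1 c a
  have hbc : ε b c * ε c b = 1 := hε1 b c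
  have hca0 : ε c a ≠ 0 := by
    intro h; rw [h, zero_mul] at hac; exact zero_ne_one hac
  -- Jacobi / Leibniz
  have h1 := hjac a b c X hX Y hY z hz
  rw [hskew c a z hz X hX, hskew c (a + b) z hz _ hXY, hε2 c a b] at h1
  have e : ε b c * (ε c a * ε c b) = ε c a := by
    calc ε b c * (ε c a * ε c b) = (ε b c * ε c b) * ε c a := by ring
    _ = ε c a := by rw [hbc, one_mul]
  simp only [map_neg, map_smul, smul_neg, smul_smul, LinearMap.neg_apply,
    LinearMap.smul_apply, e] at h1
  have leib : br (br X Y) z = br X (br Y z) - ε a b • br Y (br X z) := by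
    apply smul_right_injective A hca0
    simp only []
    linear_combination (norm := module) -h1
  -- Rota-Baxter identity
  have hR1 : R (br X y) = br X Y + ε a b • R (br Y x) := by
    have h2 := hRB a b x hx y hy
    rw [hskew a b x hx Y hY] at h2
    rw [← hXdef, ← hYdef] at h2
    rw [map_add, map_neg, map_smul] at h2
    linear_combination (norm := module) -h2
  rw [hR1, map_add, map_smul, LinearMap.add_apply, LinearMap.smul_apply, leib]
  module
end

section
/- If (A, ·, ε, R) is a Rota-Baxter left-symmetric color algebra of weight 0, then A equipped with the product x∗y := R(x)·y − ε(x,y) y·R(x) is again a Rota-Baxter left-symmetric color algebra of weight 0 with the same operator R. -/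
/-- The product `x∗y := R(x)·y − ε(x,y) y·R(x)`, where `a, b` are the degrees of the
homogeneous elements `x, y`. -/
def starRB {K G A : Type*} [Field K] [AddCommGroup A] [Module K A]
    (ε : G → G → K) (mul : A → A → A) (R : A → A) (a b : G) (x y : A) : A :=
  mul (R x) y - ε a b • mul y (R x)

/-- A Rota-Baxter left-symmetric color algebra of weight 0 gives, via
`x∗y := R(x)·y − ε(x,y) y·R(x)`, another Rota-Baxter left-symmetric color algebra of
weight 0 with the same operator R. -/
theorem stmt6 {K G A : Type*} [Field K] [AddCommGroup G] [AddCommGroup A] [Module K A]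
    (𝒜 : G → Submodule K A) (ε : G → G → K)
    (hε1 : ∀ a b, ε a b * ε b a = 1)
    (hε2 : ∀ a b c, ε a (b + c) = ε a b * ε a c)
    (hε3 : ∀ a b c, ε (a + b) c = ε a c * ε b c)
    (mul : A →ₗ[K] A →ₗ[K] A)
    (hgr : ∀ a b : G, ∀ x ∈ 𝒜 a, ∀ y ∈ 𝒜 b, mul x y ∈ 𝒜 (a + b))
    (hls : ∀ a b c : G, ∀ x ∈ 𝒜 a, ∀ y ∈ 𝒜 b, ∀ z ∈ 𝒜 c,
      mul (mul x y) z - mul x (mul y z)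
        = ε a b • (mul (mul y x) z - mul y (mul x z)))
    (R : A →ₗ[K] A)
    (hReven : ∀ a : G, ∀ x ∈ 𝒜 a, R x ∈ 𝒜 a)
    (hRB : ∀ a b : G, ∀ x ∈ 𝒜 a, ∀ y ∈ 𝒜 b,
      mul (R x) (R y) = R (mul (R x) y + mul x (R y))) :
    (∀ a b c : G, ∀ x ∈ 𝒜 a, ∀ y ∈ 𝒜 b, ∀ z ∈ 𝒜 c,
      starRB ε (fun u v => mul u v) (fun u => R u) (a + b) c
          (starRB ε (fun u v => mul u v) (fun u => R u) a b x y) z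
        - starRB ε (fun u v => mul u v) (fun u => R u) a (b + c) x
            (starRB ε (fun u v => mul u v) (fun u => R u) b c y z)
        = ε a b • (starRB ε (fun u v => mul u v) (fun u => R u) (b + a) c
              (starRB ε (fun u v => mul u v) (fun u => R u) b a y x) z
            - starRB ε (fun u v => mul u v) (fun u => R u) b (a + c) y
                (starRB ε (fun u v => mul u v) (fun u => R u) a c x z))) ∧
    (∀ a b : G, ∀ x ∈ 𝒜 a, ∀ y ∈ 𝒜 b,
      starRB ε (fun u v => mul u v) (fun u => R u) a b (R x) (R y)
        = R (starRB ε (fun u v => mul u v) (fun u => R u) a b (R x) y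
            + starRB ε (fun u v => mul u v) (fun u => R u) a b x (R y))) := by
  constructor
  · intro a b c x hx y hy z hz
    have hX := hReven a x hx
    have hY := hReven b y hy
    -- R(Xy) + R(xY) = XY and R(Yx) + R(yX) = YX
    have hR1 : mul (R (mul (R x) y)) z + mul (R (mul x (R y))) z
        = mul (mul (R x) (R y)) z := by
      rw [hRB a b x hx y hy]; simp [map_add]
    have hR2 : mul (R (mul (R y) x)) z + mul (R (mul y (R x))) z
        = mul (mul (R y) (R x)) z := by
      rw [hRB b a y hy x hx]; simp [map_add]
    have hR3 : mul z (R (mul (R x) y)) + mul z (R (mul x (R y)))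
        = mul z (mul (R x) (R y)) := by
      rw [hRB a b x hx y hy]; simp [map_add]
    have hR4 : mul z (R (mul (R y) x)) + mul z (R (mul y (R x)))
        = mul z (mul (R y) (R x)) := by
      rw [hRB b a y hy x hx]; simp [map_add]
    have E1 := hls a b c (R x) hX (R y) hY z hz
    have E2 := hls a c b (R x) hX z hz (R y) hY
    have E3 := hls b c a (R y) hY z hz (R x) hX
    have h1ab := hε1 a b
    simp only [starRB, map_sub, map_smul, LinearMap.sub_apply, LinearMap.smul_apply,
      map_add, hε2, hε3]
    linear_combination (norm := module)
      hR1 - (ε a b) • hR2 - (ε a c * ε b c) • hR3 + (ε a b * ε a c * ε b c) • hR4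
      + E1 - (ε b c) • E2 + (ε a b * ε a c) • E3
      + h1ab • (mul (R (mul x (R y))) z)
      - (ε a c * ε b c) • h1ab • (mul z (R (mul x (R y))))
      - (ε b c) • h1ab • (mul (mul (R x) z) (R y))
      + (ε a c * ε b c) • h1ab • (mul (mul z (R x)) (R y))
  · intro a b x hx y hy
    have h1 := hRB a b (R x) (hReven a x hx) y hy
    have h2 := hRB b a y hy (R x) (hReven a x hx)
    rw [map_add] at h1 h2
    simp only [starRB, map_sub, map_add, map_smul]
    linear_combination (norm := module) h1 - (ε a b) • h2
end

section
/- If (A, ·, ε, R) is a Rota-Baxter associative color algebra of weight −1, then the product x∗y := R(x)·y − ε(x,y) y·R(x) − x·y makes A into a left-symmetric color algebra. -/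
/-- The product `x∗y := R(x)·y − ε(x,y) y·R(x) − x·y`, where `a, b` are the degrees of
the homogeneous elements `x, y`. -/
def astRB {K G A : Type*} [Field K] [AddCommGroup A] [Module K A]
    (ε : G → G → K) (mul : A → A → A) (R : A → A) (a b : G) (x y : A) : A :=
  mul (R x) y - ε a b • mul y (R x) - mul x y

/-- A Rota-Baxter associative color algebra of weight −1 gives a
left-symmetric color algebra via `x∗y := R(x)·y − ε(x,y) y·R(x) − x·y`. -/
theorem stmt7 {K G A : Type*} [Field K] [AddCommGroup G] [AddCommGroup A] [Module K A]
    (𝒜 : G → Submodule K A) (ε : G → G → K)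
    (hε1 : ∀ a b, ε a b * ε b a = 1)
    (hε2 : ∀ a b c, ε a (b + c) = ε a b * ε a c)
    (hε3 : ∀ a b c, ε (a + b) c = ε a c * ε b c)
    (mul : A →ₗ[K] A →ₗ[K] A)
    (hgr : ∀ a b : G, ∀ x ∈ 𝒜 a, ∀ y ∈ 𝒜 b, mul x y ∈ 𝒜 (a + b))
    (hassoc : ∀ a b c : G, ∀ x ∈ 𝒜 a, ∀ y ∈ 𝒜 b, ∀ z ∈ 𝒜 c,
      mul (mul x y) z = mul x (mul y z))
    (R : A →ₗ[K] A)
    (hReven : ∀ a : G, ∀ x ∈ 𝒜 a, R x ∈ 𝒜 a)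
    (hRB : ∀ a b : G, ∀ x ∈ 𝒜 a, ∀ y ∈ 𝒜 b,
      mul (R x) (R y) = R (mul (R x) y + mul x (R y) - mul x y)) :
    ∀ a b c : G, ∀ x ∈ 𝒜 a, ∀ y ∈ 𝒜 b, ∀ z ∈ 𝒜 c,
      astRB ε (fun u v => mul u v) (fun u => R u) (a + b) c
          (astRB ε (fun u v => mul u v) (fun u => R u) a b x y) z
        - astRB ε (fun u v => mul u v) (fun u => R u) a (b + c) x
            (astRB ε (fun u v => mul u v) (fun u => R u) b c y z)
        = ε a b • (astRB ε (fun u v => mul u v) (fun u => R u) (b + a) c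
              (astRB ε (fun u v => mul u v) (fun u => R u) b a y x) z
            - astRB ε (fun u v => mul u v) (fun u => R u) b (a + c) y
                (astRB ε (fun u v => mul u v) (fun u => R u) a c x z)) := by
  intro a b c x hx y hy z hz
  have hRx := hReven a x hx
  have hRy := hReven b y hy
  have h1 := hRB a b x hx y hy
  have h2 := hRB b a y hy x hx
  have hab := hε1 a b
  have hne : ε a b ≠ 0 := left_ne_zero_of_mul_eq_one hab
  have hba : ε b a = (ε a b)⁻¹ := eq_inv_of_mul_eq_one_right hab
  have e1 : mul (mul (R x) y) z = mul (R x) (mul y z) := hassoc a b c _ hRx y hy z hz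
  have e2 : mul (mul y (R x)) z = mul y (mul (R x) z) := hassoc b a c y hy _ hRx z hz
  have e3 : mul (mul x y) z = mul x (mul y z) := hassoc a b c x hx y hy z hz
  have e4 : mul (R x) (mul (R y) z)
      = mul (R (mul (R x) y)) z + mul (R (mul x (R y))) z - mul (R (mul x y)) z := by
    rw [← hassoc a b c _ hRx _ hRy z hz, h1]
    simp only [map_sub, map_add, LinearMap.sub_apply, LinearMap.add_apply]
  have e5 : mul (mul (R y) z) (R x) = mul (R y) (mul z (R x)) :=
    hassoc b c a _ hRy z hz _ hRx
  have e6 : mul (mul z (R y)) (R x)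
      = mul z (R (mul (R y) x)) + mul z (R (mul y (R x))) - mul z (R (mul y x)) := by
    rw [hassoc c b a z hz _ hRy _ hRx, h2]
    simp only [map_sub, map_add]
  have e7 : mul (mul y z) (R x) = mul y (mul z (R x)) := hassoc b c a y hy z hz _ hRx
  have f1 : mul (mul (R y) x) z = mul (R y) (mul x z) := hassoc b a c _ hRy x hx z hz
  have f2 : mul (mul x (R y)) z = mul x (mul (R y) z) := hassoc a b c x hx _ hRy z hz
  have f3 : mul (mul y x) z = mul y (mul x z) := hassoc b a c y hy x hx z hz
  have f4 : mul (R y) (mul (R x) z)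
      = mul (R (mul (R y) x)) z + mul (R (mul y (R x))) z - mul (R (mul y x)) z := by
    rw [← hassoc b a c _ hRy _ hRx z hz, h2]
    simp only [map_sub, map_add, LinearMap.sub_apply, LinearMap.add_apply]
  have f5 : mul (mul (R x) z) (R y) = mul (R x) (mul z (R y)) :=
    hassoc a c b _ hRx z hz _ hRy
  have f6 : mul (mul z (R x)) (R y)
      = mul z (R (mul (R x) y)) + mul z (R (mul x (R y))) - mul z (R (mul x y)) := by
    rw [hassoc c a b z hz _ hRx _ hRy, h1]
    simp only [map_sub, map_add]
  have f7 : mul (mul x z) (R y) = mul x (mul z (R y)) := hassoc a c b x hx z hz _ hRy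
  simp only [astRB]
  rw [hε2 a b c, hε2 b a c, hε3 a b c, hε3 b a c, hba]
  simp only [map_sub, map_add, map_smul, LinearMap.sub_apply, LinearMap.add_apply,
    LinearMap.smul_apply]
  rw [e1, e2, e3, e4, e5, e6, e7, f1, f2, f3, f4, f5, f6, f7]
  match_scalars <;> field_simp <;> ring
end

section
/- If (S, ⊣, ⊢, ε) is a left-symmetric color dialgebra, then the bracket [x,y] := x⊣y − ε(x,y) y⊢x makes S into a Leibniz color algebra. -/
/-- The bracket `[x,y] := x⊣y − ε(x,y) y⊢x`, where `a, b` are the degrees of the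
homogeneous elements `x, y`. -/
def diBr {K G A : Type*} [Field K] [AddCommGroup A] [Module K A]
    (ε : G → G → K) (dl dr : A → A → A) (a b : G) (x y : A) : A :=
  dl x y - ε a b • dr y x

/-- A left-symmetric color dialgebra gives a Leibniz color algebra via
`[x,y] := x⊣y − ε(x,y) y⊢x`. -/
theorem stmt8 {K G A : Type*} [Field K] [AddCommGroup G] [AddCommGroup A] [Module K A]
    (𝒜 : G → Submodule K A) (ε : G → G → K)
    (hε1 : ∀ a b, ε a b * ε b a = 1)
    (hε2 : ∀ a b c, ε a (b + c) = ε a b * ε a c)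
    (hε3 : ∀ a b c, ε (a + b) c = ε a c * ε b c)
    (dl dr : A →ₗ[K] A →ₗ[K] A)
    (hgrl : ∀ a b : G, ∀ x ∈ 𝒜 a, ∀ y ∈ 𝒜 b, dl x y ∈ 𝒜 (a + b))
    (hgrr : ∀ a b : G, ∀ x ∈ 𝒜 a, ∀ y ∈ 𝒜 b, dr x y ∈ 𝒜 (a + b))
    (h1 : ∀ a b c : G, ∀ x ∈ 𝒜 a, ∀ y ∈ 𝒜 b, ∀ z ∈ 𝒜 c,
      dl x (dl y z) = dl x (dr y z))
    (h2 : ∀ a b c : G, ∀ x ∈ 𝒜 a, ∀ y ∈ 𝒜 b, ∀ z ∈ 𝒜 c,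
      dr (dr x y) z = dr (dl x y) z)
    (h3 : ∀ a b c : G, ∀ x ∈ 𝒜 a, ∀ y ∈ 𝒜 b, ∀ z ∈ 𝒜 c,
      dl x (dl y z) - dl (dl x y) z
        = ε a b • (dr y (dl x z) - dl (dr y x) z))
    (h4 : ∀ a b c : G, ∀ x ∈ 𝒜 a, ∀ y ∈ 𝒜 b, ∀ z ∈ 𝒜 c,
      dr x (dr y z) - dr (dr x y) z
        = ε a b • (dr y (dr x z) - dr (dr y x) z)) :
    ∀ a b c : G, ∀ x ∈ 𝒜 a, ∀ y ∈ 𝒜 b, ∀ z ∈ 𝒜 c,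
      diBr ε (fun u v => dl u v) (fun u v => dr u v) (a + b) c
          (diBr ε (fun u v => dl u v) (fun u v => dr u v) a b x y) z
        = diBr ε (fun u v => dl u v) (fun u v => dr u v) a (b + c) x
            (diBr ε (fun u v => dl u v) (fun u v => dr u v) b c y z)
          + ε b c • diBr ε (fun u v => dl u v) (fun u v => dr u v) (a + c) b
              (diBr ε (fun u v => dl u v) (fun u v => dr u v) a c x z) y := by
  intro a b c x hx y hy z hz
  have hbc0 : ε b c ≠ 0 := left_ne_zero_of_mul_eq_one (hε1 b c)
  have hcb : ε c b = (ε b c)⁻¹ := by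
    field_simp
    linear_combination hε1 b c
  have eqA := h3 a b c x hx y hy z hz
  have eqB := h3 a c b x hx z hz y hy
  have eqC := h4 c b a z hz y hy x hx
  have eqE1 := h1 a c b x hx z hz y hy
  have eqE2 := h2 b c a y hy z hz x hx
  have eqA' : dl (dl x y) z
      = dl x (dl y z) - ε a b • (dr y (dl x z) - dl (dr y x) z) := by
    rw [← eqA]; abel
  have eqB' : dl (dl x z) y
      = dl x (dl z y) - ε a c • (dr z (dl x y) - dl (dr z x) y) := by
    rw [← eqB]; abel
  rw [hcb] at eqC
  have eqC' : dr (dr z y) x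
      = dr z (dr y x) - (ε b c)⁻¹ • (dr y (dr z x) - dr (dr y z) x) := by
    rw [← eqC]; abel
  simp only [diBr, map_sub, map_smul, LinearMap.sub_apply, LinearMap.smul_apply,
    smul_sub, smul_smul, hε2, hε3, hcb]
  rw [eqA', eqB', eqC', eqE1, ← eqE2]
  match_scalars <;> field_simp <;> ring
end

section
/- If (D, ⊣, ⊢, ε) is an associative color dialgebra, then the bracket [x,y] := x⊣y − ε(x,y) y⊢x makes D into a Leibniz color algebra. -/
/-- An associative color dialgebra gives a Leibniz color algebra via
`[x,y] := x⊣y − ε(x,y) y⊢x`. -/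
theorem stmt9 {K G A : Type*} [Field K] [AddCommGroup G] [AddCommGroup A] [Module K A]
    (𝒜 : G → Submodule K A) (ε : G → G → K)
    (hε1 : ∀ a b, ε a b * ε b a = 1)
    (hε2 : ∀ a b c, ε a (b + c) = ε a b * ε a c)
    (hε3 : ∀ a b c, ε (a + b) c = ε a c * ε b c)
    (dl dr : A →ₗ[K] A →ₗ[K] A)
    (hgrl : ∀ a b : G, ∀ x ∈ 𝒜 a, ∀ y ∈ 𝒜 b, dl x y ∈ 𝒜 (a + b))
    (hgrr : ∀ a b : G, ∀ x ∈ 𝒜 a, ∀ y ∈ 𝒜 b, dr x y ∈ 𝒜 (a + b))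
    (h1 : ∀ a b c : G, ∀ x ∈ 𝒜 a, ∀ y ∈ 𝒜 b, ∀ z ∈ 𝒜 c,
      dl (dr x y) z = dr x (dl y z))
    (h2 : ∀ a b c : G, ∀ x ∈ 𝒜 a, ∀ y ∈ 𝒜 b, ∀ z ∈ 𝒜 c,
      dl x (dl y z) = dl (dl x y) z)
    (h3 : ∀ a b c : G, ∀ x ∈ 𝒜 a, ∀ y ∈ 𝒜 b, ∀ z ∈ 𝒜 c,
      dl (dl x y) z = dl x (dr y z))
    (h4 : ∀ a b c : G, ∀ x ∈ 𝒜 a, ∀ y ∈ 𝒜 b, ∀ z ∈ 𝒜 c,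
      dr (dr x y) z = dr x (dr y z))
    (h5 : ∀ a b c : G, ∀ x ∈ 𝒜 a, ∀ y ∈ 𝒜 b, ∀ z ∈ 𝒜 c,
      dr x (dr y z) = dr (dl x y) z) :
    ∀ a b c : G, ∀ x ∈ 𝒜 a, ∀ y ∈ 𝒜 b, ∀ z ∈ 𝒜 c,
      diBr ε (fun u v => dl u v) (fun u v => dr u v) (a + b) c
          (diBr ε (fun u v => dl u v) (fun u v => dr u v) a b x y) z
        = diBr ε (fun u v => dl u v) (fun u v => dr u v) a (b + c) x
            (diBr ε (fun u v => dl u v) (fun u v => dr u v) b c y z)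
          + ε b c • diBr ε (fun u v => dl u v) (fun u v => dr u v) (a + c) b
              (diBr ε (fun u v => dl u v) (fun u v => dr u v) a c x z) y := by
  intro a b c x hx y hy z hz
  simp only [diBr, map_sub, map_smul, LinearMap.sub_apply, LinearMap.smul_apply]
  rw [h2 a b c x hx y hy z hz,
      h1 b a c y hy x hx z hz,
      ← h1 c a b z hz x hx y hy,
      ← h4 c b a z hz y hy x hx,
      ← h3 a c b x hx z hz y hy,
      h5 b c a y hy z hz x hx,
      hε2, hε3, hε3 a c b]
  match_scalars <;> first
  | ring1
  | linear_combination (ε a b) * hε1 b c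
  | linear_combination (-(ε a b * ε a c)) * hε1 b c
end

section
/- If (A, ·, ε) is an associative color algebra and α : A → A an averaging operator, then the operations x⊣y := x·α(y) and x⊢y := α(x)·y make A into an associative color dialgebra; consequently the bracket [x,y] := x·α(y) − ε(x,y) α(y)·x makes A a Leibniz color algebra. -/
/-- An associative color algebra with an averaging operator α gives an
associative color dialgebra via `x⊣y := x·α(y)`, `x⊢y := α(x)·y`; consequently the
bracket `[x,y] := x·α(y) − ε(x,y) α(y)·x` makes it a Leibniz color algebra. -/
theorem stmt10 {K G A : Type*} [Field K] [AddCommGroup G] [AddCommGroup A] [Module K A]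
    (𝒜 : G → Submodule K A) (ε : G → G → K)
    (hε1 : ∀ a b, ε a b * ε b a = 1)
    (hε2 : ∀ a b c, ε a (b + c) = ε a b * ε a c)
    (hε3 : ∀ a b c, ε (a + b) c = ε a c * ε b c)
    (mul : A →ₗ[K] A →ₗ[K] A)
    (hgr : ∀ a b : G, ∀ x ∈ 𝒜 a, ∀ y ∈ 𝒜 b, mul x y ∈ 𝒜 (a + b))
    (hassoc : ∀ a b c : G, ∀ x ∈ 𝒜 a, ∀ y ∈ 𝒜 b, ∀ z ∈ 𝒜 c,
      mul (mul x y) z = mul x (mul y z))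
    (α : A →ₗ[K] A)
    (hαeven : ∀ a : G, ∀ x ∈ 𝒜 a, α x ∈ 𝒜 a)
    (hav1 : ∀ a b : G, ∀ x ∈ 𝒜 a, ∀ y ∈ 𝒜 b, α (mul (α x) y) = mul (α x) (α y))
    (hav2 : ∀ a b : G, ∀ x ∈ 𝒜 a, ∀ y ∈ 𝒜 b, mul (α x) (α y) = α (mul x (α y))) :
    -- with x⊣y := x·α(y) and x⊢y := α(x)·y, A is an associative color dialgebra:
    (∀ a b c : G, ∀ x ∈ 𝒜 a, ∀ y ∈ 𝒜 b, ∀ z ∈ 𝒜 c,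
      mul (mul (α x) y) (α z) = mul (α x) (mul y (α z))) ∧
    (∀ a b c : G, ∀ x ∈ 𝒜 a, ∀ y ∈ 𝒜 b, ∀ z ∈ 𝒜 c,
      mul x (α (mul y (α z))) = mul (mul x (α y)) (α z)) ∧
    (∀ a b c : G, ∀ x ∈ 𝒜 a, ∀ y ∈ 𝒜 b, ∀ z ∈ 𝒜 c,
      mul (mul x (α y)) (α z) = mul x (α (mul (α y) z))) ∧
    (∀ a b c : G, ∀ x ∈ 𝒜 a, ∀ y ∈ 𝒜 b, ∀ z ∈ 𝒜 c,
      mul (α (mul (α x) y)) z = mul (α x) (mul (α y) z)) ∧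
    (∀ a b c : G, ∀ x ∈ 𝒜 a, ∀ y ∈ 𝒜 b, ∀ z ∈ 𝒜 c,
      mul (α x) (mul (α y) z) = mul (α (mul x (α y))) z) ∧
    -- and with [x,y] := x·α(y) − ε(x,y) α(y)·x, A is a Leibniz color algebra:
    (∀ a b c : G, ∀ x ∈ 𝒜 a, ∀ y ∈ 𝒜 b, ∀ z ∈ 𝒜 c,
      (fun (p q : G) (u v : A) => mul u (α v) - ε p q • mul (α v) u) (a + b) c
          ((fun (p q : G) (u v : A) => mul u (α v) - ε p q • mul (α v) u) a b x y) z
        = (fun (p q : G) (u v : A) => mul u (α v) - ε p q • mul (α v) u) a (b + c) x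
            ((fun (p q : G) (u v : A) => mul u (α v) - ε p q • mul (α v) u) b c y z)
          + ε b c •
            (fun (p q : G) (u v : A) => mul u (α v) - ε p q • mul (α v) u) (a + c) b
              ((fun (p q : G) (u v : A) => mul u (α v) - ε p q • mul (α v) u) a c x z) y) := by

  refine ⟨?_, ?_, ?_, ?_, ?_, ?_⟩
  · intro a b c x hx y hy z hz
    exact hassoc a b c (α x) (hαeven a x hx) y hy (α z) (hαeven c z hz)
  · intro a b c x hx y hy z hz
    rw [← hav2 b c y hy z hz,
      hassoc a b c x hx (α y) (hαeven b y hy) (α z) (hαeven c z hz)]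
  · intro a b c x hx y hy z hz
    rw [hav1 b c y hy z hz,
      hassoc a b c x hx (α y) (hαeven b y hy) (α z) (hαeven c z hz)]
  · intro a b c x hx y hy z hz
    rw [hav1 a b x hx y hy,
      hassoc a b c (α x) (hαeven a x hx) (α y) (hαeven b y hy) z hz]
  · intro a b c x hx y hy z hz
    rw [← hav2 a b x hx y hy,
      hassoc a b c (α x) (hαeven a x hx) (α y) (hαeven b y hy) z hz]
  · intro a b c x hx y hy z hz
    have hy' := hαeven b y hy
    have hz' := hαeven c z hz
    simp only
    simp only [map_sub, map_smul, LinearMap.sub_apply, LinearMap.smul_apply,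
      smul_sub, smul_smul]
    rw [← hav2 b c y hy z hz, hav1 c b z hz y hy,
      hassoc a b c x hx (α y) hy' (α z) hz',
      hassoc b a c (α y) hy' x hx (α z) hz',
      hassoc c a b (α z) hz' x hx (α y) hy',
      hassoc c b a (α z) hz' (α y) hy' x hx,
      hassoc a c b x hx (α z) hz' (α y) hy',
      hassoc b c a (α y) hy' (α z) hz' x hx,
      hε3 a b c, hε2 a b c, hε3 a c b]
    match_scalars
    all_goals try ring
    all_goals try linear_combination ε a b * hε1 b c
    all_goals linear_combination (-(ε a b * ε a c)) * hε1 b c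
end

section
/- If (A, ⊣, ⊥, ⊢, ε) is an associative color trialgebra, then A with the triple bracket [x,y,z] := x⊣(y⊥z − ε(y,z) z⊥y) − ε(x,y+z)(y⊥z − ε(y,z) z⊥y)⊢x is a ternary Leibniz color algebra. -/
/-- The ternary bracket
`[x,y,z] := x⊣(y⊥z − ε(y,z) z⊥y) − ε(x,y+z)(y⊥z − ε(y,z) z⊥y)⊢x`,
where `a, b, c` are the degrees of the homogeneous elements `x, y, z`. -/
def triBr {K G A : Type*} [Field K] [AddCommGroup G] [AddCommGroup A] [Module K A]
    (ε : G → G → K) (dl dm dr : A → A → A) (a b c : G) (x y z : A) : A :=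
  dl x (dm y z - ε b c • dm z y) - ε a (b + c) • dr (dm y z - ε b c • dm z y) x

/-- binary bracket `[x,w] = x⊣w - ε(a,p) w⊢x` for `x` of degree `a`, `w` of degree `p`. -/
def bbr {K G A : Type*} [Field K] [AddCommGroup G] [AddCommGroup A] [Module K A]
    (ε : G → G → K) (dl dr : A →ₗ[K] A →ₗ[K] A) (a p : G) (x w : A) : A :=
  dl x w - ε a p • dr w x

/-- skew middle product `y⊥z - ε(b,c) z⊥y`. -/
def msk {K G A : Type*} [Field K] [AddCommGroup G] [AddCommGroup A] [Module K A]
    (ε : G → G → K) (dm : A →ₗ[K] A →ₗ[K] A) (b c : G) (y z : A) : A :=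
  dm y z - ε b c • dm z y

/-- color Leibniz identity for the binary bracket, element level. -/
lemma bbrL {K G A : Type*} [Field K] [AddCommGroup G] [AddCommGroup A] [Module K A]
    (ε : G → G → K)
    (hε1 : ∀ a b, ε a b * ε b a = 1)
    (hε2 : ∀ a b c, ε a (b + c) = ε a b * ε a c)
    (hε3 : ∀ a b c, ε (a + b) c = ε a c * ε b c)
    (dl dr : A →ₗ[K] A →ₗ[K] A)
    (a p q : G) (x w v : A)
    (E1 : dl (dl x w) v = dl x (dl w v))
    (E2 : dl (dr w x) v = dr w (dl x v))
    (E3 : dl (dr v x) w = dr v (dl x w))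
    (E4 : dr (dr v w) x = dr v (dr w x))
    (E5 : dl (dl x v) w = dl x (dr v w))
    (E6 : dr (dl w v) x = dr w (dr v x)) :
    bbr ε dl dr (a+p) q (bbr ε dl dr a p x w) v
      = bbr ε dl dr a (p+q) x (bbr ε dl dr p q w v)
        + ε p q • bbr ε dl dr (a+q) p (bbr ε dl dr a q x v) w := by
  simp only [bbr, map_sub, map_smul, LinearMap.sub_apply, LinearMap.smul_apply,
    smul_sub, smul_smul, hε2, hε3]
  rw [E1, E2, E3, E4, ← E5, E6]
  match_scalars
  · ring
  · linear_combination (ε a p) * hε1 p q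
  · ring
  · ring
  · ring
  · linear_combination (-(ε a p * ε a q)) * hε1 p q

/-- the bracket acts as ε-derivation of the skew middle product, element level. -/
lemma mskL {K G A : Type*} [Field K] [AddCommGroup G] [AddCommGroup A] [Module K A]
    (ε : G → G → K)
    (hε1 : ∀ a b, ε a b * ε b a = 1)
    (hε2 : ∀ a b c, ε a (b + c) = ε a b * ε a c)
    (hε3 : ∀ a b c, ε (a + b) c = ε a c * ε b c)
    (dl dm dr : A →ₗ[K] A →ₗ[K] A)
    (b c q : G) (y z v : A)
    (F1 : dl (dm y z) v = dm y (dl z v))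
    (F2 : dl (dm z y) v = dm z (dl y v))
    (F3 : dr v (dm y z) = dm (dr v y) z)
    (F4 : dr v (dm z y) = dm (dr v z) y)
    (F5 : dm (dl y v) z = dm y (dr v z))
    (F6 : dm (dl z v) y = dm z (dr v y)) :
    bbr ε dl dr (b+c) q (msk ε dm b c y z) v
      = msk ε dm b (c+q) y (bbr ε dl dr c q z v)
        + ε c q • msk ε dm (b+q) c (bbr ε dl dr b q y v) z := by
  simp only [bbr, msk, map_sub, map_smul, LinearMap.sub_apply, LinearMap.smul_apply,
    smul_sub, smul_smul, hε2, hε3]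
  rw [F1, F2, F3, F4, ← F5, ← F6]
  match_scalars
  · ring
  · linear_combination (ε b c) * hε1 c q
  · ring
  · ring
  · ring
  · linear_combination (-(ε b c * ε b q)) * hε1 c q
/-- An associative color trialgebra gives a ternary Leibniz color
algebra via the bracket `triBr`. -/
theorem stmt12 {K G A : Type*} [Field K] [AddCommGroup G] [AddCommGroup A] [Module K A]
    (𝒜 : G → Submodule K A) (ε : G → G → K)
    (hε1 : ∀ a b, ε a b * ε b a = 1)
    (hε2 : ∀ a b c, ε a (b + c) = ε a b * ε a c)
    (hε3 : ∀ a b c, ε (a + b) c = ε a c * ε b c)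
    (dl dm dr : A →ₗ[K] A →ₗ[K] A)
    (hgrl : ∀ a b : G, ∀ x ∈ 𝒜 a, ∀ y ∈ 𝒜 b, dl x y ∈ 𝒜 (a + b))
    (hgrm : ∀ a b : G, ∀ x ∈ 𝒜 a, ∀ y ∈ 𝒜 b, dm x y ∈ 𝒜 (a + b))
    (hgrr : ∀ a b : G, ∀ x ∈ 𝒜 a, ∀ y ∈ 𝒜 b, dr x y ∈ 𝒜 (a + b))
    (hassocl : ∀ a b c : G, ∀ x ∈ 𝒜 a, ∀ y ∈ 𝒜 b, ∀ z ∈ 𝒜 c,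
      dl (dl x y) z = dl x (dl y z))
    (hassocm : ∀ a b c : G, ∀ x ∈ 𝒜 a, ∀ y ∈ 𝒜 b, ∀ z ∈ 𝒜 c,
      dm (dm x y) z = dm x (dm y z))
    (hassocr : ∀ a b c : G, ∀ x ∈ 𝒜 a, ∀ y ∈ 𝒜 b, ∀ z ∈ 𝒜 c,
      dr (dr x y) z = dr x (dr y z))
    (h1 : ∀ a b c : G, ∀ x ∈ 𝒜 a, ∀ y ∈ 𝒜 b, ∀ z ∈ 𝒜 c,
      dl (dl x y) z = dl x (dr y z) ∧ dl x (dr y z) = dl x (dm y z))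
    (h2 : ∀ a b c : G, ∀ x ∈ 𝒜 a, ∀ y ∈ 𝒜 b, ∀ z ∈ 𝒜 c,
      dl (dr x y) z = dr x (dl y z))
    (h3 : ∀ a b c : G, ∀ x ∈ 𝒜 a, ∀ y ∈ 𝒜 b, ∀ z ∈ 𝒜 c,
      dr (dl x y) z = dr x (dr y z) ∧ dr x (dr y z) = dr (dm x y) z)
    (h4 : ∀ a b c : G, ∀ x ∈ 𝒜 a, ∀ y ∈ 𝒜 b, ∀ z ∈ 𝒜 c,
      dl (dm x y) z = dm x (dl y z))
    (h5 : ∀ a b c : G, ∀ x ∈ 𝒜 a, ∀ y ∈ 𝒜 b, ∀ z ∈ 𝒜 c,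
      dm (dl x y) z = dm x (dr y z))
    (h6 : ∀ a b c : G, ∀ x ∈ 𝒜 a, ∀ y ∈ 𝒜 b, ∀ z ∈ 𝒜 c,
      dm (dr x y) z = dr x (dm y z)) :
    ∀ a b c d e : G, ∀ x ∈ 𝒜 a, ∀ y ∈ 𝒜 b, ∀ z ∈ 𝒜 c, ∀ t ∈ 𝒜 d, ∀ u ∈ 𝒜 e,
      triBr ε (fun p q => dl p q) (fun p q => dm p q) (fun p q => dr p q)
          (a + b + c) d e
          (triBr ε (fun p q => dl p q) (fun p q => dm p q) (fun p q => dr p q)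
            a b c x y z) t u
        = triBr ε (fun p q => dl p q) (fun p q => dm p q) (fun p q => dr p q)
            a b (c + d + e) x y
            (triBr ε (fun p q => dl p q) (fun p q => dm p q) (fun p q => dr p q)
              c d e z t u)
          + ε c (d + e) •
            triBr ε (fun p q => dl p q) (fun p q => dm p q) (fun p q => dr p q)
              a (b + d + e) c x
              (triBr ε (fun p q => dl p q) (fun p q => dm p q) (fun p q => dr p q)
                b d e y t u) z
          + ε (b + c) (d + e) •
            triBr ε (fun p q => dl p q) (fun p q => dm p q) (fun p q => dr p q)
              (a + d + e) b c
              (triBr ε (fun p q => dl p q) (fun p q => dm p q) (fun p q => dr p q)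
                a d e x t u) y z := by
  intro a b c d e x hx y hy z hz t ht u hu
  have hW : msk ε dm b c y z ∈ 𝒜 (b + c) := by
    have h' := hgrm c b z hz y hy
    rw [add_comm c b] at h'
    exact sub_mem (hgrm b c y hy z hz) (Submodule.smul_mem _ _ h')
  have hV : msk ε dm d e t u ∈ 𝒜 (d + e) := by
    have h' := hgrm e d u hu t ht
    rw [add_comm e d] at h'
    exact sub_mem (hgrm d e t ht u hu) (Submodule.smul_mem _ _ h')
  have key1 := bbrL ε hε1 hε2 hε3 dl dr a (b + c) (d + e) x (msk ε dm b c y z) (msk ε dm d e t u)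
    (hassocl a (b + c) (d + e) x hx (msk ε dm b c y z) hW (msk ε dm d e t u) hV)
    (h2 (b + c) a (d + e) (msk ε dm b c y z) hW x hx (msk ε dm d e t u) hV)
    (h2 (d + e) a (b + c) (msk ε dm d e t u) hV x hx (msk ε dm b c y z) hW)
    (hassocr (d + e) (b + c) a (msk ε dm d e t u) hV (msk ε dm b c y z) hW x hx)
    ((h1 a (d + e) (b + c) x hx (msk ε dm d e t u) hV (msk ε dm b c y z) hW).1)
    ((h3 (b + c) (d + e) a (msk ε dm b c y z) hW (msk ε dm d e t u) hV x hx).1)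
  have key2 := mskL ε hε1 hε2 hε3 dl dm dr b c (d + e) y z (msk ε dm d e t u)
    (h4 b c (d + e) y hy z hz (msk ε dm d e t u) hV)
    (h4 c b (d + e) z hz y hy (msk ε dm d e t u) hV)
    ((h6 (d + e) b c (msk ε dm d e t u) hV y hy z hz).symm)
    ((h6 (d + e) c b (msk ε dm d e t u) hV z hz y hy).symm)
    (h5 b (d + e) c y hy (msk ε dm d e t u) hV z hz)
    (h5 c (d + e) b z hz (msk ε dm d e t u) hV y hy)
  show bbr ε dl dr (a + b + c) (d + e) (bbr ε dl dr a (b + c) x (msk ε dm b c y z)) (msk ε dm d e t u)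
      = bbr ε dl dr a (b + (c + d + e)) x
          (msk ε dm b (c + d + e) y (bbr ε dl dr c (d + e) z (msk ε dm d e t u)))
        + ε c (d + e) • bbr ε dl dr a (b + d + e + c) x
            (msk ε dm (b + d + e) c (bbr ε dl dr b (d + e) y (msk ε dm d e t u)) z)
        + ε (b + c) (d + e) • bbr ε dl dr (a + d + e) (b + c)
            (bbr ε dl dr a (d + e) x (msk ε dm d e t u)) (msk ε dm b c y z)
  rw [show a + b + c = a + (b + c) from add_assoc a b c, key1, key2]
  simp only [bbr, msk, map_add, map_sub, map_smul, LinearMap.add_apply,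
    LinearMap.sub_apply, LinearMap.smul_apply, smul_sub, smul_add, smul_smul, hε2, hε3]
  module
end

section
/- If (A, ·, ε, R) is a Rota-Baxter associative color algebra of weight λ, then the operations x⊣y := x·R(y), x⊢y := ε(x,y)R(x)·y, and x•y := λ ε(x,y) x·y make A into a tridendriform color algebra. -/
section RBtridend

variable {K G A : Type*} [Field K] [AddCommGroup G] [AddCommGroup A] [Module K A]

/-- `x⊣y := x·R(y)`. -/
def ldf (mul : A → A → A) (R : A → A) (x y : A) : A := mul x (R y)

/-- `x⊢y := ε(x,y) R(x)·y`, where `a, b` are the degrees of `x, y`. -/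
def rdf (ε : G → G → K) (mul : A → A → A) (R : A → A) (a b : G) (x y : A) : A :=
  ε a b • mul (R x) y

/-- `x•y := λ ε(x,y) x·y`, where `a, b` are the degrees of `x, y`. -/
def mdf (ε : G → G → K) (mul : A → A → A) (lam : K) (a b : G) (x y : A) : A :=
  lam • ε a b • mul x y

/-- A Rota-Baxter associative color algebra of weight λ gives a
tridendriform color algebra via `x⊣y := x·R(y)`, `x⊢y := ε(x,y)R(x)·y` and
`x•y := λ ε(x,y) x·y`. -/
theorem stmt13 (𝒜 : G → Submodule K A) (ε : G → G → K)
    (hε1 : ∀ a b, ε a b * ε b a = 1)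
    (hε2 : ∀ a b c, ε a (b + c) = ε a b * ε a c)
    (hε3 : ∀ a b c, ε (a + b) c = ε a c * ε b c)
    (mul : A →ₗ[K] A →ₗ[K] A)
    (hgr : ∀ a b : G, ∀ x ∈ 𝒜 a, ∀ y ∈ 𝒜 b, mul x y ∈ 𝒜 (a + b))
    (hassoc : ∀ a b c : G, ∀ x ∈ 𝒜 a, ∀ y ∈ 𝒜 b, ∀ z ∈ 𝒜 c,
      mul (mul x y) z = mul x (mul y z))
    (R : A →ₗ[K] A) (lam : K)
    (hReven : ∀ a : G, ∀ x ∈ 𝒜 a, R x ∈ 𝒜 a)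
    (hRB : ∀ a b : G, ∀ x ∈ 𝒜 a, ∀ y ∈ 𝒜 b,
      mul (R x) (R y) = R (mul (R x) y + mul x (R y) + lam • mul x y)) :
    ∀ a b c : G, ∀ x ∈ 𝒜 a, ∀ y ∈ 𝒜 b, ∀ z ∈ 𝒜 c,
      (ldf (fun p q => mul p q) (fun p => R p)
          (ldf (fun p q => mul p q) (fun p => R p) x y) z
        = ldf (fun p q => mul p q) (fun p => R p) x
            (ldf (fun p q => mul p q) (fun p => R p) y z
              + ε c b • rdf ε (fun p q => mul p q) (fun p => R p) b c y z
              + ε c b • mdf ε (fun p q => mul p q) lam b c y z)) ∧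
      (ldf (fun p q => mul p q) (fun p => R p)
          (rdf ε (fun p q => mul p q) (fun p => R p) a b x y) z
        = ε c a • rdf ε (fun p q => mul p q) (fun p => R p) a (b + c) x
            (ldf (fun p q => mul p q) (fun p => R p) y z)) ∧
      (rdf ε (fun p q => mul p q) (fun p => R p) a (b + c) x
          (rdf ε (fun p q => mul p q) (fun p => R p) b c y z)
        = rdf ε (fun p q => mul p q) (fun p => R p) (a + b) c
            (ε a b • ldf (fun p q => mul p q) (fun p => R p) x y
              + rdf ε (fun p q => mul p q) (fun p => R p) a b x y
              + mdf ε (fun p q => mul p q) lam a b x y) z) ∧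
      (mdf ε (fun p q => mul p q) lam (a + b) c
          (ldf (fun p q => mul p q) (fun p => R p) x y) z
        = ε b a • mdf ε (fun p q => mul p q) lam a (b + c) x
            (rdf ε (fun p q => mul p q) (fun p => R p) b c y z)) ∧
      (mdf ε (fun p q => mul p q) lam (a + b) c
          (rdf ε (fun p q => mul p q) (fun p => R p) a b x y) z
        = rdf ε (fun p q => mul p q) (fun p => R p) a (b + c) x
            (mdf ε (fun p q => mul p q) lam b c y z)) ∧
      (ldf (fun p q => mul p q) (fun p => R p)
          (mdf ε (fun p q => mul p q) lam a b x y) z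
        = ε c a • mdf ε (fun p q => mul p q) lam a (b + c) x
            (ldf (fun p q => mul p q) (fun p => R p) y z)) ∧
      (mdf ε (fun p q => mul p q) lam (a + b) c
          (mdf ε (fun p q => mul p q) lam a b x y) z
        = mdf ε (fun p q => mul p q) lam a (b + c) x
            (mdf ε (fun p q => mul p q) lam b c y z)) := by
  intro a b c x hx y hy z hz
  have hRx := hReven a x hx
  have hRy := hReven b y hy
  have hRz := hReven c z hz
  have hRBbc : mul (R y) (R z)
      = R (mul (R y) z) + R (mul y (R z)) + lam • R (mul y z) := by
    rw [hRB b c y hy z hz]; simp [map_add, map_smul]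
  have hRBab : mul (R x) (R y)
      = R (mul (R x) y) + R (mul x (R y)) + lam • R (mul x y) := by
    rw [hRB a b x hx y hy]; simp [map_add, map_smul]
  refine ⟨?_, ?_, ?_, ?_, ?_, ?_, ?_⟩
  · simp only [ldf, rdf, mdf, map_add, map_smul, LinearMap.add_apply,
      LinearMap.smul_apply, smul_add]
    rw [hassoc a b c x hx (R y) hRy (R z) hRz, hRBbc]
    simp only [map_add, map_smul, smul_add]
    match_scalars <;> first
      | ring1
      | linear_combination -hε1 c b
      | linear_combination (-lam) * hε1 c b
  · simp only [ldf, rdf, mdf, map_add, map_smul, LinearMap.add_apply,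
      LinearMap.smul_apply, smul_add, hε2, hε3]
    rw [hassoc a b c (R x) hRx y hy (R z) hRz]
    match_scalars <;> first
      | ring1
      | linear_combination (-(ε a b)) * hε1 c a
  · simp only [ldf, rdf, mdf]
    have hS : R (ε a b • mul x (R y) + ε a b • mul (R x) y
        + lam • ε a b • mul x y) = ε a b • mul (R x) (R y) := by
      rw [hRBab]; simp only [map_add, map_smul, smul_add, smul_smul]
      match_scalars <;> ring
    rw [hS]
    simp only [map_smul, LinearMap.smul_apply]
    rw [hassoc a b c (R x) hRx (R y) hRy z hz]
    match_scalars <;> (simp only [hε2, hε3]; ring)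
  · simp only [ldf, rdf, mdf, map_add, map_smul, LinearMap.add_apply,
      LinearMap.smul_apply, smul_add, hε2, hε3]
    rw [hassoc a b c x hx (R y) hRy z hz]
    match_scalars <;> first
      | ring1
      | linear_combination (-(lam * ε a c * ε b c)) * hε1 b a
  · simp only [ldf, rdf, mdf, map_add, map_smul, LinearMap.add_apply,
      LinearMap.smul_apply, smul_add, hε2, hε3]
    rw [hassoc a b c (R x) hRx y hy z hz]
    match_scalars <;> ring
  · simp only [ldf, rdf, mdf, map_add, map_smul, LinearMap.add_apply,
      LinearMap.smul_apply, smul_add, hε2, hε3]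
    rw [hassoc a b c x hx y hy (R z) hRz]
    match_scalars <;> first
      | ring1
      | linear_combination (-(lam * ε a b)) * hε1 c a
  · simp only [ldf, rdf, mdf, map_add, map_smul, LinearMap.add_apply,
      LinearMap.smul_apply, smul_add, hε2, hε3]
    rw [hassoc a b c x hx y hy z hz]
    match_scalars <;> ring

end RBtridend
end

section
/- If (A, ⊣, ⊢, •, ε) is a tridendriform color algebra, then the product x∗y := x⊢y + ε(x,y)x⊣y + x•y is associative (making (A,∗,ε) an associative color algebra). -/
/-- In a tridendriform color algebra, the product
`x∗y := x⊢y + ε(x,y) x⊣y + x•y` is associative on homogeneous elements. -/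
theorem stmt14 {K G A : Type*} [Field K] [AddCommGroup G] [AddCommGroup A] [Module K A]
    (𝒜 : G → Submodule K A) (ε : G → G → K)
    (hε1 : ∀ a b, ε a b * ε b a = 1)
    (hε2 : ∀ a b c, ε a (b + c) = ε a b * ε a c)
    (hε3 : ∀ a b c, ε (a + b) c = ε a c * ε b c)
    (dl dr dm : A →ₗ[K] A →ₗ[K] A)
    (hgrl : ∀ a b : G, ∀ x ∈ 𝒜 a, ∀ y ∈ 𝒜 b, dl x y ∈ 𝒜 (a + b))
    (hgrr : ∀ a b : G, ∀ x ∈ 𝒜 a, ∀ y ∈ 𝒜 b, dr x y ∈ 𝒜 (a + b))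
    (hgrm : ∀ a b : G, ∀ x ∈ 𝒜 a, ∀ y ∈ 𝒜 b, dm x y ∈ 𝒜 (a + b))
    (h1 : ∀ a b c : G, ∀ x ∈ 𝒜 a, ∀ y ∈ 𝒜 b, ∀ z ∈ 𝒜 c,
      dl (dl x y) z = dl x (dl y z + ε c b • dr y z + ε c b • dm y z))
    (h2 : ∀ a b c : G, ∀ x ∈ 𝒜 a, ∀ y ∈ 𝒜 b, ∀ z ∈ 𝒜 c,
      dl (dr x y) z = ε c a • dr x (dl y z))
    (h3 : ∀ a b c : G, ∀ x ∈ 𝒜 a, ∀ y ∈ 𝒜 b, ∀ z ∈ 𝒜 c,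
      dr x (dr y z) = dr (ε a b • dl x y + dr x y + dm x y) z)
    (h4 : ∀ a b c : G, ∀ x ∈ 𝒜 a, ∀ y ∈ 𝒜 b, ∀ z ∈ 𝒜 c,
      dm (dl x y) z = ε b a • dm x (dr y z))
    (h5 : ∀ a b c : G, ∀ x ∈ 𝒜 a, ∀ y ∈ 𝒜 b, ∀ z ∈ 𝒜 c,
      dm (dr x y) z = dr x (dm y z))
    (h6 : ∀ a b c : G, ∀ x ∈ 𝒜 a, ∀ y ∈ 𝒜 b, ∀ z ∈ 𝒜 c,
      dl (dm x y) z = ε c a • dm x (dl y z))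
    (h7 : ∀ a b c : G, ∀ x ∈ 𝒜 a, ∀ y ∈ 𝒜 b, ∀ z ∈ 𝒜 c,
      dm (dm x y) z = dm x (dm y z)) :
    ∀ a b c : G, ∀ x ∈ 𝒜 a, ∀ y ∈ 𝒜 b, ∀ z ∈ 𝒜 c,
      (fun (p q : G) (u v : A) => dr u v + ε p q • dl u v + dm u v) (a + b) c
          ((fun (p q : G) (u v : A) => dr u v + ε p q • dl u v + dm u v) a b x y) z
        = (fun (p q : G) (u v : A) => dr u v + ε p q • dl u v + dm u v) a (b + c) x
            ((fun (p q : G) (u v : A) => dr u v + ε p q • dl u v + dm u v) b c y z) := by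
  intro a b c x hx y hy z hz
  have H1 := h1 a b c x hx y hy z hz
  have H2 := h2 a b c x hx y hy z hz
  have H3 := h3 a b c x hx y hy z hz
  have H4 := h4 a b c x hx y hy z hz
  have H5 := h5 a b c x hx y hy z hz
  have H6 := h6 a b c x hx y hy z hz
  have H7 := h7 a b c x hx y hy z hz
  have hba : ε b a = (ε a b)⁻¹ := eq_inv_of_mul_eq_one_left (by rw [mul_comm]; exact hε1 a b)
  have hca : ε c a = (ε a c)⁻¹ := eq_inv_of_mul_eq_one_left (by rw [mul_comm]; exact hε1 a c)
  have hcb : ε c b = (ε b c)⁻¹ := eq_inv_of_mul_eq_one_left (by rw [mul_comm]; exact hε1 b c)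
  have nab : ε a b ≠ 0 := left_ne_zero_of_mul_eq_one (hε1 a b)
  have nac : ε a c ≠ 0 := left_ne_zero_of_mul_eq_one (hε1 a c)
  have nbc : ε b c ≠ 0 := left_ne_zero_of_mul_eq_one (hε1 b c)
  simp only [map_add, map_smul, LinearMap.add_apply, LinearMap.smul_apply] at H3 ⊢
  rw [H1, H2, H4, H5, H6, H7]
  simp only [map_add, map_smul, LinearMap.add_apply, LinearMap.smul_apply]
  rw [hε2, hε3, hba, hca, hcb] at *
  have Hrr : (dr ((dr x) y)) z
      = (dr x) ((dr y) z) - ε a b • (dr ((dl x) y)) z - (dr ((dm x) y)) z := by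
    rw [H3]; abel
  rw [Hrr]
  match_scalars <;> field_simp <;> ring
end

section
/- If (A, ⊣, ⊥, ⊢) is an associative trialgebra (ungraded), then (A, ⊣, ⊢, ⊥) is a (−1)-tridendriform algebra; in particular the product x∗y := x⊣y + x⊢y − x⊥y is associative. -/
/-- An associative trialgebra (A, ⊣, ⊥, ⊢) is a (−1)-tridendriform
algebra with `• := ⊥`; in particular `x∗y := x⊣y + x⊢y − x⊥y` is associative. -/
theorem stmt15 {K A : Type*} [Field K] [AddCommGroup A] [Module K A]
    (dl dm dr : A →ₗ[K] A →ₗ[K] A)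
    (hassocl : ∀ x y z : A, dl (dl x y) z = dl x (dl y z))
    (hassocm : ∀ x y z : A, dm (dm x y) z = dm x (dm y z))
    (hassocr : ∀ x y z : A, dr (dr x y) z = dr x (dr y z))
    (h1 : ∀ x y z : A, dl (dl x y) z = dl x (dr y z) ∧ dl x (dr y z) = dl x (dm y z))
    (h2 : ∀ x y z : A, dl (dr x y) z = dr x (dl y z))
    (h3 : ∀ x y z : A, dr (dl x y) z = dr x (dr y z) ∧ dr x (dr y z) = dr (dm x y) z)
    (h4 : ∀ x y z : A, dl (dm x y) z = dm x (dl y z))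
    (h5 : ∀ x y z : A, dm (dl x y) z = dm x (dr y z))
    (h6 : ∀ x y z : A, dm (dr x y) z = dr x (dm y z)) :
    -- (A, ⊣, ⊢, ⊥) is a (−1)-tridendriform algebra:
    (∀ x y z : A, dl (dl x y) z = dl x (dl y z + dr y z - dm y z)) ∧
    (∀ x y z : A, dl (dr x y) z = dr x (dl y z)) ∧
    (∀ x y z : A, dr x (dr y z) = dr (dl x y + dr x y - dm x y) z) ∧
    (∀ x y z : A, dm (dl x y) z = dm x (dr y z)) ∧
    (∀ x y z : A, dm (dr x y) z = dr x (dm y z)) ∧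
    (∀ x y z : A, dl (dm x y) z = dm x (dl y z)) ∧
    (∀ x y z : A, dm (dm x y) z = dm x (dm y z)) ∧
    -- in particular x∗y := x⊣y + x⊢y − x⊥y is associative:
    (∀ x y z : A,
      (fun u v : A => dl u v + dr u v - dm u v)
          ((fun u v : A => dl u v + dr u v - dm u v) x y) z
        = (fun u v : A => dl u v + dr u v - dm u v) x
            ((fun u v : A => dl u v + dr u v - dm u v) y z)) := by
  refine ⟨?_, h2, ?_, h5, h6, h4, hassocm, ?_⟩
  · intro x y z
    have e0 := hassocl x y z
    have e1 : dl x (dr y z) = dl x (dl y z) := ((h1 x y z).1).symm.trans e0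
    have e2 : dl x (dm y z) = dl x (dl y z) := ((h1 x y z).2).symm.trans e1
    simp only [map_add, map_sub]
    rw [e0, e1, e2]; abel
  · intro x y z
    simp only [map_add, map_sub, LinearMap.add_apply, LinearMap.sub_apply]
    rw [(h3 x y z).1, hassocr, ← (h3 x y z).2]
    abel
  · intro x y z
    have e1 : dl x (dr y z) = dl x (dl y z) := ((h1 x y z).1).symm.trans (hassocl x y z)
    have e2 : dl x (dm y z) = dl x (dl y z) := ((h1 x y z).2).symm.trans e1
    have e3 : dr (dl x y) z = dr x (dr y z) := (h3 x y z).1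
    have e4 : dr (dm x y) z = dr x (dr y z) := ((h3 x y z).2).symm
    simp only [map_add, map_sub, LinearMap.add_apply, LinearMap.sub_apply,
      hassocl, hassocm, hassocr, h2, h4, h5, h6, e1, e2, e3, e4]
    abel
end

section
/- If (A, ·, ε) is an associative color algebra, then the triple product [x,y,z] := x·y·z + ε(x,y)ε(x,z)ε(y,z) z·y·x makes A into a color Jordan triple system. -/
/-- The Jordan triple product `[x,y,z] := x·y·z + ε(x,y)ε(x,z)ε(y,z) z·y·x`, where
`a, b, c` are the degrees of the homogeneous elements `x, y, z`. -/
def jt {K G A : Type*} [Field K] [AddCommGroup A] [Module K A]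
    (ε : G → G → K) (mul : A → A → A) (a b c : G) (x y z : A) : A :=
  mul (mul x y) z + (ε a b * ε a c * ε b c) • mul (mul z y) x

section Aux
variable {K G A : Type*} [Field K] [AddCommGroup G] [AddCommGroup A] [Module K A]
    (𝒜 : G → Submodule K A) (mul : A →ₗ[K] A →ₗ[K] A)
    (hgr : ∀ a b : G, ∀ x ∈ 𝒜 a, ∀ y ∈ 𝒜 b, mul x y ∈ 𝒜 (a + b))
    (hassoc : ∀ a b c : G, ∀ x ∈ 𝒜 a, ∀ y ∈ 𝒜 b, ∀ z ∈ 𝒜 c,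
      mul (mul x y) z = mul x (mul y z))

include hgr hassoc in
lemma reassoc1 (p q r s w : G) (xp : A) (hp : xp ∈ 𝒜 p) (xq : A) (hq : xq ∈ 𝒜 q)
    (xr : A) (hr : xr ∈ 𝒜 r) (xs : A) (hs : xs ∈ 𝒜 s) (xw : A) (hw : xw ∈ 𝒜 w) :
    mul (mul xp xq) (mul (mul xr xs) xw)
      = mul (mul (mul (mul xp xq) xr) xs) xw := by
  rw [← hassoc (p+q) (r+s) w (mul xp xq) (hgr p q xp hp xq hq)
        (mul xr xs) (hgr r s xr hr xs hs) xw hw,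
      ← hassoc (p+q) r s (mul xp xq) (hgr p q xp hp xq hq) xr hr xs hs]

include hgr hassoc in
lemma reassoc2 (p q r s w : G) (xp : A) (hp : xp ∈ 𝒜 p) (xq : A) (hq : xq ∈ 𝒜 q)
    (xr : A) (hr : xr ∈ 𝒜 r) (xs : A) (hs : xs ∈ 𝒜 s) (xw : A) (hw : xw ∈ 𝒜 w) :
    mul (mul xp (mul (mul xq xr) xs)) xw
      = mul (mul (mul (mul xp xq) xr) xs) xw := by
  rw [← hassoc p (q+r) s xp hp (mul xq xr) (hgr q r xq hq xr hr) xs hs,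
      ← hassoc p q r xp hp xq hq xr hr]

end Aux

/-- An associative color algebra gives a color Jordan triple system via
`[x,y,z] := x·y·z + ε(x,y)ε(x,z)ε(y,z) z·y·x`. -/
theorem stmt17 {K G A : Type*} [Field K] [AddCommGroup G] [AddCommGroup A] [Module K A]
    (𝒜 : G → Submodule K A) (ε : G → G → K)
    (hε1 : ∀ a b, ε a b * ε b a = 1)
    (hε2 : ∀ a b c, ε a (b + c) = ε a b * ε a c)
    (hε3 : ∀ a b c, ε (a + b) c = ε a c * ε b c)
    (mul : A →ₗ[K] A →ₗ[K] A)
    (hgr : ∀ a b : G, ∀ x ∈ 𝒜 a, ∀ y ∈ 𝒜 b, mul x y ∈ 𝒜 (a + b))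
    (hassoc : ∀ a b c : G, ∀ x ∈ 𝒜 a, ∀ y ∈ 𝒜 b, ∀ z ∈ 𝒜 c,
      mul (mul x y) z = mul x (mul y z)) :
    -- outer ε-symmetry:
    (∀ a b c : G, ∀ x ∈ 𝒜 a, ∀ y ∈ 𝒜 b, ∀ z ∈ 𝒜 c,
      jt ε (fun p q => mul p q) a b c x y z
        = (ε a b * ε a c * ε b c) • jt ε (fun p q => mul p q) c b a z y x) ∧
    -- color Jordan triple identity:
    (∀ a b c d e : G, ∀ x ∈ 𝒜 a, ∀ y ∈ 𝒜 b, ∀ z ∈ 𝒜 c, ∀ t ∈ 𝒜 d, ∀ u ∈ 𝒜 e,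
      jt ε (fun p q => mul p q) (a + b + c) d e
          (jt ε (fun p q => mul p q) a b c x y z) t u
        = jt ε (fun p q => mul p q) a b (c + d + e) x y
            (jt ε (fun p q => mul p q) c d e z t u)
          - (ε c (d + e) * ε d e) •
            jt ε (fun p q => mul p q) a (b + e + d) c x
              (jt ε (fun p q => mul p q) b e d y u t) z
          + ε (b + c) (d + e) •
            jt ε (fun p q => mul p q) (a + d + e) b c
              (jt ε (fun p q => mul p q) a d e x t u) y z) := by
  have hne : ∀ p q : G, ε p q ≠ 0 := by
    intro p q h
    simpa [h] using hε1 p q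
  have hinv : ∀ p q : G, ε q p = (ε p q)⁻¹ := fun p q =>
    eq_inv_of_mul_eq_one_right (hε1 p q)
  constructor
  · intro a b c x hx y hy z hz
    simp only [jt]
    match_scalars <;>
    · try simp only [hinv a b, hinv a c, hinv b c]
      try field_simp [hne]
      try ring
  · intro a b c d e x hx y hy z hz t ht u hu
    simp only [jt]
    simp only [map_add, map_smul, LinearMap.add_apply, LinearMap.smul_apply,
      smul_add, smul_smul]
    rw [reassoc1 𝒜 mul hgr hassoc e d a b c u hu t ht x hx y hy z hz,
        reassoc1 𝒜 mul hgr hassoc e d c b a u hu t ht z hz y hy x hx,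
        reassoc1 𝒜 mul hgr hassoc a b c d e x hx y hy z hz t ht u hu,
        reassoc1 𝒜 mul hgr hassoc a b e d c x hx y hy u hu t ht z hz,
        reassoc1 𝒜 mul hgr hassoc c b a d e z hz y hy x hx t ht u hu,
        reassoc1 𝒜 mul hgr hassoc c b e d a z hz y hy u hu t ht x hx,
        reassoc2 𝒜 mul hgr hassoc a b e d c x hx y hy u hu t ht z hz,
        reassoc2 𝒜 mul hgr hassoc a d e b c x hx t ht u hu y hy z hz,
        reassoc2 𝒜 mul hgr hassoc c b e d a z hz y hy u hu t ht x hx,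
        reassoc2 𝒜 mul hgr hassoc c d e b a z hz t ht u hu y hy x hx]
    simp only [hε2, hε3]
    match_scalars <;>
    · try simp only [hinv a b, hinv a c, hinv a d, hinv a e, hinv b c, hinv b d,
        hinv b e, hinv c d, hinv c e, hinv d e]
      try field_simp [hne]
      try ring
end

section
/- If (J, [-,-,-], ε) is a color Jordan triple system, then the bracket {x,y,z} := [x,y,z] − ε(y,z)[x,z,y] makes J into a color Lie triple system. -/
/-- The bracket `{x,y,z} := [x,y,z] − ε(y,z)[x,z,y]`, where `a, b, c` are the degrees
of the homogeneous elements `x, y, z`. -/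
def ltBr {K G A : Type*} [Field K] [AddCommGroup A] [Module K A]
    (ε : G → G → K) (tbr : A → A → A → A) (a b c : G) (x y z : A) : A :=
  tbr x y z - ε b c • tbr x z y

set_option maxHeartbeats 2000000 in
/-- A color Jordan triple system gives a color Lie triple system via
`{x,y,z} := [x,y,z] − ε(y,z)[x,z,y]`. -/
theorem stmt18 {K G A : Type*} [Field K] [AddCommGroup G] [AddCommGroup A] [Module K A]
    (𝒜 : G → Submodule K A) (ε : G → G → K)
    (hε1 : ∀ a b, ε a b * ε b a = 1)
    (hε2 : ∀ a b c, ε a (b + c) = ε a b * ε a c)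
    (hε3 : ∀ a b c, ε (a + b) c = ε a c * ε b c)
    (tbr : A →ₗ[K] A →ₗ[K] A →ₗ[K] A)
    (hgr : ∀ a b c : G, ∀ x ∈ 𝒜 a, ∀ y ∈ 𝒜 b, ∀ z ∈ 𝒜 c, tbr x y z ∈ 𝒜 (a + b + c))
    (houter : ∀ a b c : G, ∀ x ∈ 𝒜 a, ∀ y ∈ 𝒜 b, ∀ z ∈ 𝒜 c,
      tbr x y z = (ε a b * ε a c * ε b c) • tbr z y x)
    (hjordan : ∀ a b c d e : G, ∀ x ∈ 𝒜 a, ∀ y ∈ 𝒜 b, ∀ z ∈ 𝒜 c, ∀ t ∈ 𝒜 d, ∀ u ∈ 𝒜 e,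
      tbr (tbr x y z) t u
        = tbr x y (tbr z t u)
          - (ε c (d + e) * ε d e) • tbr x (tbr y u t) z
          + ε (b + c) (d + e) • tbr (tbr x t u) y z) :
    -- right ε-skew-symmetry:
    (∀ a b c : G, ∀ x ∈ 𝒜 a, ∀ y ∈ 𝒜 b, ∀ z ∈ 𝒜 c,
      ltBr ε (fun p q r => tbr p q r) a b c x y z
        = -(ε b c • ltBr ε (fun p q r => tbr p q r) a c b x z y)) ∧
    -- ternary ε-Jacobi identity:
    (∀ a b c : G, ∀ x ∈ 𝒜 a, ∀ y ∈ 𝒜 b, ∀ z ∈ 𝒜 c,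
        ε c a • ltBr ε (fun p q r => tbr p q r) a b c x y z
      + ε a b • ltBr ε (fun p q r => tbr p q r) b c a y z x
      + ε b c • ltBr ε (fun p q r => tbr p q r) c a b z x y = 0) ∧
    -- ternary ε-Nambu identity:
    (∀ a b c d e : G, ∀ x ∈ 𝒜 a, ∀ y ∈ 𝒜 b, ∀ z ∈ 𝒜 c, ∀ t ∈ 𝒜 d, ∀ u ∈ 𝒜 e,
      ltBr ε (fun p q r => tbr p q r) (a + b + c) d e
          (ltBr ε (fun p q r => tbr p q r) a b c x y z) t u
        = ltBr ε (fun p q r => tbr p q r) a b (c + d + e) x y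
            (ltBr ε (fun p q r => tbr p q r) c d e z t u)
          + ε c (d + e) •
            ltBr ε (fun p q r => tbr p q r) a (b + d + e) c x
              (ltBr ε (fun p q r => tbr p q r) b d e y t u) z
          + ε (b + c) (d + e) •
            ltBr ε (fun p q r => tbr p q r) (a + d + e) b c
              (ltBr ε (fun p q r => tbr p q r) a d e x t u) y z) := by
  have hne : ∀ p q : G, ε p q ≠ 0 := fun p q => left_ne_zero_of_mul_eq_one (hε1 p q)
  have hinv : ∀ p q : G, ε q p = (ε p q)⁻¹ :=
    fun p q => (inv_eq_of_mul_eq_one_right (hε1 p q)).symm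
  refine ⟨?_, ?_, ?_⟩
  · intro a b c x hx y hy z hz
    simp only [ltBr, smul_sub, smul_smul, hε1, neg_sub, one_smul]
  · intro a b c x hx y hy z hz
    simp only [ltBr]
    rw [houter b c a y hy z hz x hx, houter c a b z hz x hx y hy,
      houter c b a z hz y hy x hx]
    match_scalars <;>
      · simp only [hinv b a, hinv c a, hinv c b]
        field_simp [hne b a, hne c a, hne c b]
        try ring
  · intro a b c d e x hx y hy z hz t ht u hu
    simp only [ltBr, map_sub, map_smul, LinearMap.sub_apply, LinearMap.smul_apply]
    rw [hjordan a b c d e x hx y hy z hz t ht u hu,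
        hjordan a c b d e x hx z hz y hy t ht u hu,
        hjordan a b c e d x hx y hy z hz u hu t ht,
        hjordan a c b e d x hx z hz y hy u hu t ht]
    match_scalars <;>
      · simp only [hε2, hε3, hinv b a, hinv c a, hinv c b, hinv d a, hinv d b,
          hinv d c, hinv e a, hinv e b, hinv e c, hinv e d]
        try ring
        try field_simp [hne]
        try ring
end

section
/- If (A, ·, [-,-], ε) is a non-commutative Leibniz-Poisson color algebra, then (A, ·, {-,-,-}, ε) with {x,y,z} := [x, y·z] is a non-commutative ternary Leibniz-Nambu-Poisson color algebra: the ternary ε-Nambu identity holds for {-,-,-} and {x·y, z, t} = x·{y,z,t} + ε(y,z+t){x,z,t}·y. -/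
/-- A non-commutative Leibniz-Poisson color algebra gives a
non-commutative ternary Leibniz-Nambu-Poisson color algebra via
`{x,y,z} := [x, y·z]`: the ternary ε-Nambu identity and the right ternary Leibniz
rule hold. -/
theorem stmt19 {K G A : Type*} [Field K] [AddCommGroup G] [AddCommGroup A] [Module K A]
    (𝒜 : G → Submodule K A) (ε : G → G → K)
    (hε1 : ∀ a b, ε a b * ε b a = 1)
    (hε2 : ∀ a b c, ε a (b + c) = ε a b * ε a c)
    (hε3 : ∀ a b c, ε (a + b) c = ε a c * ε b c)
    (mul : A →ₗ[K] A →ₗ[K] A) (br : A →ₗ[K] A →ₗ[K] A)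
    (hgrm : ∀ a b : G, ∀ x ∈ 𝒜 a, ∀ y ∈ 𝒜 b, mul x y ∈ 𝒜 (a + b))
    (hgrb : ∀ a b : G, ∀ x ∈ 𝒜 a, ∀ y ∈ 𝒜 b, br x y ∈ 𝒜 (a + b))
    (hassoc : ∀ a b c : G, ∀ x ∈ 𝒜 a, ∀ y ∈ 𝒜 b, ∀ z ∈ 𝒜 c,
      mul (mul x y) z = mul x (mul y z))
    (hLeib : ∀ a b c : G, ∀ x ∈ 𝒜 a, ∀ y ∈ 𝒜 b, ∀ z ∈ 𝒜 c,
      br (br x y) z = br x (br y z) + ε b c • br (br x z) y)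
    (hcomp : ∀ a b c : G, ∀ x ∈ 𝒜 a, ∀ y ∈ 𝒜 b, ∀ z ∈ 𝒜 c,
      br (mul x y) z = mul x (br y z) + ε b c • mul (br x z) y) :
    -- ternary ε-Nambu identity for {x,y,z} := [x, y·z]:
    (∀ a b c d e : G, ∀ x ∈ 𝒜 a, ∀ y ∈ 𝒜 b, ∀ z ∈ 𝒜 c, ∀ t ∈ 𝒜 d, ∀ u ∈ 𝒜 e,
      br (br x (mul y z)) (mul t u)
        = br x (mul y (br z (mul t u)))
          + ε c (d + e) • br x (mul (br y (mul t u)) z)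
          + ε (b + c) (d + e) • br (br x (mul t u)) (mul y z)) ∧
    -- right ternary Leibniz rule {x·y,z,t} = x·{y,z,t} + ε(y,z+t){x,z,t}·y:
    (∀ a b c d : G, ∀ x ∈ 𝒜 a, ∀ y ∈ 𝒜 b, ∀ z ∈ 𝒜 c, ∀ t ∈ 𝒜 d,
      br (mul x y) (mul z t)
        = mul x (br y (mul z t)) + ε b (c + d) • mul (br x (mul z t)) y) := by
  constructor
  · intro a b c d e x hx y hy z hz t ht u hu
    have hyz := hgrm b c y hy z hz
    have htu := hgrm d e t ht u hu
    rw [hLeib a (b+c) (d+e) x hx _ hyz _ htu,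
        hcomp b c (d+e) y hy z hz _ htu]
    simp only [map_add, map_smul, hε3]
  · intro a b c d x hx y hy z hz t ht
    exact hcomp a b (c+d) x hx y hy _ (hgrm c d z hz t ht)
end
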